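/- A qubit belongs to at most one su(2) block for ψ: if S and T are both su(2) blocks for ψ and some qubit j lies in both S and T, then S = T. -/

import Mathlib

open scoped Matrix

noncomputable section

/-- The `n`-qubit Hilbert space `(ℂ²)^{⊗n}`, realized as functions `(Fin n → Fin 2) → ℂ`. -/
abbrev QState (n : ℕ) := (Fin n → Fin 2) → ℂ

/-- The ambient real vector space `ℝ × (Fin n → M₂(ℂ))` containing `u(1) ⊕ su(2)^n`. -/
abbrev GV (n : ℕ) := ℝ × (Fin n → Matrix (Fin 2) (Fin 2) ℂ)

/-- `su(2)`: traceless skew-Hermitian `2 × 2` complex matrices, as a real subspace. -/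
def su2 : Submodule ℝ (Matrix (Fin 2) (Fin 2) ℂ) where
  carrier := {X | Xᴴ = -X ∧ X.trace = 0}
  add_mem' := by
    rintro X Y ⟨hX1, hX2⟩ ⟨hY1, hY2⟩
    exact ⟨by rw [Matrix.conjTranspose_add, hX1, hY1, neg_add],
           by rw [Matrix.trace_add, hX2, hY2, add_zero]⟩
  zero_mem' := ⟨by simp, by simp⟩
  smul_mem' := by
    rintro r X ⟨hX1, hX2⟩
    exact ⟨by rw [Matrix.conjTranspose_smul, hX1, star_trivial, smul_neg],
           by rw [Matrix.trace_smul, hX2, smul_zero]⟩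

/-- The Lie algebra `g = u(1) ⊕ su(2)^n` as a real subspace of `GV n`. -/
def gSub (n : ℕ) : Submodule ℝ (GV n) :=
  (⊤ : Submodule ℝ ℝ).prod (Submodule.pi Set.univ fun _ => su2)

/-- `g_S`: elements `(0, X)` of `g` with `X j = 0` for `j ∉ S`. -/
def gS {n : ℕ} (S : Set (Fin n)) : Submodule ℝ (GV n) :=
  (⊥ : Submodule ℝ ℝ).prod (Submodule.pi Set.univ fun j =>
    letI := Classical.dec (j ∈ S)
    if j ∈ S then su2 else ⊥)

/-- `ḡ_S`: elements `(t, X)` of `g` with `X j = 0` for `j ∈ S`. -/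
def gBar {n : ℕ} (S : Set (Fin n)) : Submodule ℝ (GV n) :=
  (⊤ : Submodule ℝ ℝ).prod (Submodule.pi Set.univ fun j =>
    letI := Classical.dec (j ∈ S)
    if j ∈ S then (⊥ : Submodule ℝ (Matrix (Fin 2) (Fin 2) ℂ)) else su2)

/-- The projection `P_j : g → su(2)`, `(t, X) ↦ X j`. -/
def Pj {n : ℕ} (j : Fin n) : GV n →ₗ[ℝ] Matrix (Fin 2) (Fin 2) ℂ :=
  (LinearMap.proj j).comp (LinearMap.snd ℝ ℝ (Fin n → Matrix (Fin 2) (Fin 2) ℂ))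

/-- Apply the matrix `X` to qubit `j` of the state `ψ`. -/
def applySingle {n : ℕ} (j : Fin n) (X : Matrix (Fin 2) (Fin 2) ℂ) (ψ : QState n) : QState n :=
  fun I => ∑ k : Fin 2, X (I j) k * ψ (Function.update I j k)

/-- The infinitesimal local-unitary action: `dΦ_ψ(t, X) = i t ψ + Σ_j X_j ψ`. -/
def dPhi {n : ℕ} (ψ : QState n) : GV n →ₗ[ℝ] QState n where
  toFun x := fun I => Complex.I * (x.1 : ℂ) * ψ I + ∑ j, applySingle j (x.2 j) ψ I
  map_add' x y := by
    funext I
    simp only [applySingle, Prod.fst_add, Prod.snd_add, Pi.add_apply, Matrix.add_apply,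
      Complex.ofReal_add, add_mul, Finset.sum_add_distrib]
    ring
  map_smul' r x := by
    funext I
    simp only [applySingle, Prod.smul_fst, Prod.smul_snd, Pi.smul_apply, Matrix.smul_apply,
      smul_eq_mul, Complex.real_smul, Complex.ofReal_mul, RingHom.id_apply,
      Finset.mul_sum, mul_add]
    congr 1
    · ring
    · refine Finset.sum_congr rfl fun j _ => Finset.sum_congr rfl fun k _ => by ring

/-- The stabilizer subalgebra `K_ψ = {(t,X) ∈ g : dΦ_ψ(t,X) = 0}`. -/
def stab {n : ℕ} (ψ : QState n) : Submodule ℝ (GV n) :=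
  gSub n ⊓ LinearMap.ker (dPhi ψ)

/-- The componentwise bracket on `g` (zero in the `u(1)` component). -/
def gBracket {n : ℕ} (x y : GV n) : GV n :=
  (0, fun j => ⁅x.2 j, y.2 j⁆)

/-- An `su(2)` block for `ψ`: a set `S` of qubits with `dim (K_ψ ∩ g_S) > 1` and
`dim (K_ψ ∩ g_{S'}) = 0` for every proper subset `S' ⊊ S`. -/
def Su2Block {n : ℕ} (ψ : QState n) (S : Set (Fin n)) : Prop :=
  1 < Module.finrank ℝ ↥(stab ψ ⊓ gS S) ∧
  ∀ S' : Set (Fin n), S' ⊂ S → Module.finrank ℝ ↥(stab ψ ⊓ gS S') = 0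

/-- The union `B` of all `su(2)` blocks for `ψ`. -/
def blockUnion {n : ℕ} (ψ : QState n) : Set (Fin n) :=
  {q | ∃ S : Set (Fin n), Su2Block ψ S ∧ q ∈ S}

/-- The number `p` of `su(2)` blocks for `ψ`. -/
def blockCount {n : ℕ} (ψ : QState n) : ℕ :=
  {S : Set (Fin n) | Su2Block ψ S}.ncard

/-- `ψ` factors across the set `S` of qubits: `ψ(I) = φ(I|_S) · χ(I|_{Sᶜ})`. -/
def FactorsAcross {n : ℕ} (ψ : QState n) (S : Set (Fin n)) : Prop :=
  ∃ (φ : (↥S → Fin 2) → ℂ) (χ : (↥(Sᶜ) → Fin 2) → ℂ),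
    ∀ I : Fin n → Fin 2, ψ I = φ (fun j => I j.1) * χ (fun j => I j.1)

/-- `ψ` is a nonproduct state: it factors across no proper nonempty set of qubits. -/
def IsNonproduct {n : ℕ} (ψ : QState n) : Prop :=
  ∀ S : Set (Fin n), S ≠ ∅ → S ≠ Set.univ → ¬ FactorsAcross ψ S

/-- `ψ` has a single-qubit factor. -/
def HasSingleQubitFactor {n : ℕ} (ψ : QState n) : Prop :=
  ∃ j : Fin n, FactorsAcross ψ {j}

/-- Apply the local unitary (or just local linear) transformation `⊗_j U_j` to `ψ`. -/
def luApply {n : ℕ} (U : Fin n → Matrix (Fin 2) (Fin 2) ℂ) (ψ : QState n) : QState n :=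
  fun I => ∑ J : Fin n → Fin 2, (∏ j, U j (I j) (J j)) * ψ J

/-- Local unitary equivalence of `n`-qubit states. -/
def LUEquiv {n : ℕ} (ψ ψ' : QState n) : Prop :=
  ∃ U : Fin n → Matrix (Fin 2) (Fin 2) ℂ,
    (∀ j, U j ∈ Matrix.unitaryGroup (Fin 2) ℂ) ∧ ψ' = luApply U ψ

/-- The two-qubit singlet state `φ(a,b) = δ_{a0} δ_{b1} − δ_{a1} δ_{b0}`. -/
def singletFn : Fin 2 → Fin 2 → ℂ := fun a b =>
  if a = 0 ∧ b = 1 then 1 else if a = 1 ∧ b = 0 then -1 else 0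

/-- `ψ` has a singlet factor: it is LU-equivalent to a state that factors across a
two-element set of qubits, with the two-qubit factor being the singlet. -/
def HasSingletFactor {n : ℕ} (ψ : QState n) : Prop :=
  ∃ ψ' : QState n, LUEquiv ψ ψ' ∧ ∃ j k : Fin n, j ≠ k ∧
    ∃ χ : (↥(({j, k} : Set (Fin n))ᶜ) → Fin 2) → ℂ,
      ∀ I : Fin n → Fin 2, ψ' I = singletFn (I j) (I k) * χ (fun q => I q.1)

/-- The matrix `A = diag(i, −i) ∈ su(2)`. -/
def matA : Matrix (Fin 2) (Fin 2) ℂ := !![Complex.I, 0; 0, -Complex.I]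

/-- The generalized `n`-qubit GHZ state `α|0…0⟩ + β|1…1⟩`. -/
def ghz (n : ℕ) (α β : ℂ) : QState n := fun I =>
  if ∀ j, I j = 0 then α else if ∀ j, I j = 1 then β else 0
section Aux

open Module

lemma applySingle_same {n : ℕ} (j : Fin n) (X Y : Matrix (Fin 2) (Fin 2) ℂ) (ψ : QState n) :
    applySingle j X (applySingle j Y ψ) = applySingle j (X * Y) ψ := by
  funext I
  simp only [applySingle, Matrix.mul_apply, Finset.sum_mul, Finset.mul_sum]
  rw [Finset.sum_comm]
  refine Finset.sum_congr rfl fun m _ => Finset.sum_congr rfl fun k _ => ?_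
  rw [Function.update_self, Function.update_idem]
  ring

lemma applySingle_comm {n : ℕ} {j k : Fin n} (h : j ≠ k) (X Y : Matrix (Fin 2) (Fin 2) ℂ)
    (ψ : QState n) :
    applySingle j X (applySingle k Y ψ) = applySingle k Y (applySingle j X ψ) := by
  funext I
  simp only [applySingle, Finset.mul_sum]
  rw [Finset.sum_comm]
  refine Finset.sum_congr rfl fun b _ => Finset.sum_congr rfl fun a _ => ?_
  rw [Function.update_of_ne h.symm, Function.update_of_ne h, Function.update_comm h]
  ring

lemma applySingle_sum {n : ℕ} (j : Fin n) (X : Matrix (Fin 2) (Fin 2) ℂ)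
    (f : Fin n → QState n) (I : Fin n → Fin 2) :
    ∑ k, applySingle j X (f k) I = applySingle j X (fun I' => ∑ k, f k I') I := by
  simp only [applySingle, Finset.mul_sum]
  rw [Finset.sum_comm]

lemma applySingle_const_mul {n : ℕ} (j : Fin n) (X : Matrix (Fin 2) (Fin 2) ℂ)
    (c : ℂ) (ψ : QState n) (I : Fin n → Fin 2) :
    applySingle j X (fun I' => c * ψ I') I = c * applySingle j X ψ I := by
  simp only [applySingle, Finset.mul_sum]
  exact Finset.sum_congr rfl fun m _ => by ring

lemma sum_applySingle_of_ker {n : ℕ} (ψ : QState n) (x : GV n) (hx : dPhi ψ x = 0)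
    (I : Fin n → Fin 2) :
    ∑ j, applySingle j (x.2 j) ψ I = -(Complex.I * x.1) * ψ I := by
  have h := congrFun hx I
  simp only [dPhi, LinearMap.coe_mk, AddHom.coe_mk, Pi.zero_apply] at h
  linear_combination h

lemma bracket_mem_ker {n : ℕ} (ψ : QState n) (x y : GV n)
    (hx : dPhi ψ x = 0) (hy : dPhi ψ y = 0) : dPhi ψ (gBracket x y) = 0 := by
  have hxI := sum_applySingle_of_ker ψ x hx
  have hyI := sum_applySingle_of_ker ψ y hy
  funext I
  show Complex.I * ((0:ℝ):ℂ) * ψ I + ∑ j, applySingle j ⁅x.2 j, y.2 j⁆ ψ I = 0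
  have hdiag : ∀ j, applySingle j ⁅x.2 j, y.2 j⁆ ψ I
      = ∑ k, (applySingle j (x.2 j) (applySingle k (y.2 k) ψ) I
            - applySingle k (y.2 k) (applySingle j (x.2 j) ψ) I) := by
    intro j
    rw [Finset.sum_eq_single j]
    · rw [applySingle_same, applySingle_same, Ring.lie_def]
      simp only [applySingle, Matrix.sub_apply, sub_mul, Finset.sum_sub_distrib]
    · intro k _ hk
      rw [applySingle_comm (Ne.symm hk), sub_self]
    · intro h; exact absurd (Finset.mem_univ j) h
  rw [Complex.ofReal_zero, mul_zero, zero_mul, zero_add]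
  calc ∑ j, applySingle j ⁅x.2 j, y.2 j⁆ ψ I
      = ∑ j, ∑ k, (applySingle j (x.2 j) (applySingle k (y.2 k) ψ) I
            - applySingle k (y.2 k) (applySingle j (x.2 j) ψ) I) :=
        Finset.sum_congr rfl fun j _ => hdiag j
    _ = ∑ j, ∑ k, applySingle j (x.2 j) (applySingle k (y.2 k) ψ) I
        - ∑ j, ∑ k, applySingle k (y.2 k) (applySingle j (x.2 j) ψ) I := by
        rw [← Finset.sum_sub_distrib]
        exact Finset.sum_congr rfl fun j _ => by rw [Finset.sum_sub_distrib]
    _ = 0 := by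
        rw [Finset.sum_comm (s := Finset.univ) (t := Finset.univ)
          (f := fun j k => applySingle k (y.2 k) (applySingle j (x.2 j) ψ) I)]
        have h1 : ∑ j, ∑ k, applySingle j (x.2 j) (applySingle k (y.2 k) ψ) I
            = -(Complex.I * y.1) * (-(Complex.I * x.1) * ψ I) := by
          calc ∑ j, ∑ k, applySingle j (x.2 j) (applySingle k (y.2 k) ψ) I
              = ∑ j, applySingle j (x.2 j) (fun I' => ∑ k, applySingle k (y.2 k) ψ I') I :=
                Finset.sum_congr rfl fun j _ => applySingle_sum j _ _ I
            _ = ∑ j, applySingle j (x.2 j) (fun I' => -(Complex.I * y.1) * ψ I') I := by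
                refine Finset.sum_congr rfl fun j _ => ?_
                congr 1
                funext I'
                exact hyI I'
            _ = ∑ j, (-(Complex.I * y.1) * applySingle j (x.2 j) ψ I) :=
                Finset.sum_congr rfl fun j _ => applySingle_const_mul j _ _ ψ I
            _ = -(Complex.I * y.1) * ∑ j, applySingle j (x.2 j) ψ I := by
                rw [Finset.mul_sum]
            _ = _ := by rw [hxI I]
        have h2 : ∑ k, ∑ j, applySingle k (y.2 k) (applySingle j (x.2 j) ψ) I
            = -(Complex.I * x.1) * (-(Complex.I * y.1) * ψ I) := by
          calc ∑ k, ∑ j, applySingle k (y.2 k) (applySingle j (x.2 j) ψ) I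
              = ∑ k, applySingle k (y.2 k) (fun I' => ∑ j, applySingle j (x.2 j) ψ I') I :=
                Finset.sum_congr rfl fun k _ => applySingle_sum k _ _ I
            _ = ∑ k, applySingle k (y.2 k) (fun I' => -(Complex.I * x.1) * ψ I') I := by
                refine Finset.sum_congr rfl fun k _ => ?_
                congr 1
                funext I'
                exact hxI I'
            _ = ∑ k, (-(Complex.I * x.1) * applySingle k (y.2 k) ψ I) :=
                Finset.sum_congr rfl fun k _ => applySingle_const_mul k _ _ ψ I
            _ = -(Complex.I * x.1) * ∑ k, applySingle k (y.2 k) ψ I := by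
                rw [Finset.mul_sum]
            _ = _ := by rw [hyI I]
        rw [h1, h2]
        ring

end Aux
section Aux2
open Module

lemma mem_su2_iff {X : Matrix (Fin 2) (Fin 2) ℂ} :
    X ∈ su2 ↔ Xᴴ = -X ∧ X.trace = 0 := Iff.rfl

lemma su2_entries {X : Matrix (Fin 2) (Fin 2) ℂ} (h : X ∈ su2) :
    (X 0 0).re = 0 ∧ X 1 1 = -X 0 0 ∧ X 1 0 = -(starRingEnd ℂ) (X 0 1) := by
  obtain ⟨h1, h2⟩ := mem_su2_iff.mp h
  have e : ∀ i j, (starRingEnd ℂ) (X j i) = -X i j := by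
    intro i j
    have := congrFun (congrFun h1 i) j
    simpa [Matrix.conjTranspose_apply, Matrix.neg_apply] using this
  refine ⟨?_, ?_, ?_⟩
  · have := congrArg Complex.re (e 0 0)
    simp [Complex.conj_re] at this
    linarith
  · have ht := Matrix.trace_fin_two X ▸ h2
    linear_combination ht
  · have := e 1 0
    linear_combination this

lemma su2_comm_scalar {X Y : Matrix (Fin 2) (Fin 2) ℂ}
    (hX : X ∈ su2) (hY : Y ∈ su2) (hY0 : Y ≠ 0) (hc : X * Y = Y * X) :
    ∃ r : ℝ, X = r • Y := by
  obtain ⟨hXre, hX11, hX10⟩ := su2_entries hX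
  obtain ⟨hYre, hY11, hY10⟩ := su2_entries hY
  set a := X 0 0 with ha
  set z := X 0 1 with hz
  set b := Y 0 0 with hb
  set w := Y 0 1 with hw
  have c00 : (X * Y) 0 0 = (Y * X) 0 0 := by rw [hc]
  have c01 : (X * Y) 0 1 = (Y * X) 0 1 := by rw [hc]
  simp only [Matrix.mul_apply, Fin.sum_univ_two] at c00 c01
  rw [hX10, hY10] at c00
  rw [hX11, hY11] at c01
  have haw : a * w = b * z := by linear_combination c01 / 2
  by_cases hbz : b ≠ 0
  · have haI : a = (a.im : ℂ) * Complex.I := by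
      apply Complex.ext <;> simp [hXre]
    have hbI : b = (b.im : ℂ) * Complex.I := by
      apply Complex.ext <;> simp [hYre]
    have hbim : b.im ≠ 0 := by
      intro h0; apply hbz; apply Complex.ext <;> simp [hYre, h0]
    refine ⟨a.im / b.im, ?_⟩
    have hr : a = ((a.im / b.im : ℝ) : ℂ) * b := by
      apply Complex.ext
      · simp [Complex.mul_re, Complex.ofReal_re, Complex.ofReal_im, hXre, hYre]
      · simp only [Complex.mul_im, Complex.ofReal_re, Complex.ofReal_im, hYre,
          mul_zero, zero_mul, add_zero]
        field_simp
    have hzw : z = ((a.im / b.im : ℝ) : ℂ) * w := by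
      refine mul_left_cancel₀ hbz ?_
      linear_combination w * hr - haw
    ext i k
    fin_cases i <;> fin_cases k <;>
      simp only [Fin.mk_zero, Fin.mk_one, Matrix.smul_apply, Complex.real_smul]
    · exact hr
    · exact hzw
    · rw [hX10, hY10, hzw, map_mul, Complex.conj_ofReal]; ring
    · rw [hX11, hY11]; linear_combination -hr
  · push_neg at hbz
    by_cases hww : w = 0
    · exfalso; apply hY0
      ext i k
      fin_cases i <;> fin_cases k <;>
        simp [Fin.mk_zero, Fin.mk_one, ← hb, ← hw, hbz, hww, hY10, hY11]
    · have ha0 : a = 0 := by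
        have h0 : a * w = 0 := by rw [haw, hbz, zero_mul]
        exact (mul_eq_zero.mp h0).resolve_right hww
      have hs : z * (starRingEnd ℂ) w = w * (starRingEnd ℂ) z := by
        linear_combination -c00
      have hsre : z * (starRingEnd ℂ) w = (((z * (starRingEnd ℂ) w).re : ℝ) : ℂ) := by
        have him : (z * (starRingEnd ℂ) w).im = 0 := by
          have := congrArg Complex.im hs
          simp only [Complex.mul_im, Complex.conj_re, Complex.conj_im] at this ⊢
          linarith
        exact (Complex.ext_iff.mpr ⟨by simp, by simp [him]⟩)
      set s : ℝ := (z * (starRingEnd ℂ) w).re with hsdef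
      have hnorm : Complex.normSq w ≠ 0 := by
        simpa [Complex.normSq_eq_zero] using hww
      have hN : ((Complex.normSq w : ℝ) : ℂ) ≠ 0 := by exact_mod_cast hnorm
      refine ⟨s / Complex.normSq w, ?_⟩
      have hzw : z = ((s / Complex.normSq w : ℝ) : ℂ) * w := by
        have h1 : z * ((starRingEnd ℂ) w * w) = (s : ℂ) * w := by
          rw [← mul_assoc, hsre]
        have h2 : (starRingEnd ℂ) w * w = (Complex.normSq w : ℂ) := by
          rw [mul_comm]; exact Complex.mul_conj w
        rw [h2] at h1
        rw [Complex.ofReal_div, div_mul_eq_mul_div, eq_div_iff hN]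
        linear_combination h1
      ext i k
      fin_cases i <;> fin_cases k <;>
        simp only [Fin.mk_zero, Fin.mk_one, Matrix.smul_apply, Complex.real_smul]
      · rw [← ha, ← hb, ha0, hbz]; ring
      · exact hzw
      · rw [hX10, hY10, hzw, map_mul, Complex.conj_ofReal]; ring
      · rw [hX11, hY11, ha0, hbz]; ring

end Aux2
section Aux3
open Module

lemma mem_gS_iff {n : ℕ} {S : Set (Fin n)} {x : GV n} :
    x ∈ gS S ↔ x.1 = 0 ∧ (∀ j ∈ S, x.2 j ∈ su2) ∧ (∀ j ∉ S, x.2 j = 0) := by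
  simp only [gS, Submodule.mem_prod, Submodule.mem_bot, Submodule.mem_pi, Set.mem_univ,
    forall_true_left]
  constructor
  · rintro ⟨h1, h2⟩
    refine ⟨h1, fun k hk => ?_, fun k hk => ?_⟩
    · have := h2 k; rwa [if_pos hk] at this
    · have := h2 k; rwa [if_neg hk, Submodule.mem_bot] at this
  · rintro ⟨h1, h2, h3⟩
    refine ⟨h1, fun k => ?_⟩
    by_cases hk : k ∈ S
    · rw [if_pos hk]; exact h2 k hk
    · rw [if_neg hk, Submodule.mem_bot]; exact h3 k hk

lemma mem_stab_iff {n : ℕ} {ψ : QState n} {x : GV n} :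
    x ∈ stab ψ ↔ x ∈ gSub n ∧ dPhi ψ x = 0 := by
  rw [stab, Submodule.mem_inf, LinearMap.mem_ker]

lemma su2_closed_bracket {X Y : Matrix (Fin 2) (Fin 2) ℂ}
    (hX : X ∈ su2) (hY : Y ∈ su2) : ⁅X, Y⁆ ∈ su2 := by
  obtain ⟨hX1, hX2⟩ := mem_su2_iff.mp hX
  obtain ⟨hY1, hY2⟩ := mem_su2_iff.mp hY
  rw [Ring.lie_def]
  refine mem_su2_iff.mpr ⟨?_, ?_⟩
  · rw [Matrix.conjTranspose_sub, Matrix.conjTranspose_mul, Matrix.conjTranspose_mul,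
      hX1, hY1, neg_sub]
    simp [Matrix.neg_mul, Matrix.mul_neg]
  · rw [Matrix.trace_sub, Matrix.trace_mul_comm, sub_self]

lemma gBracket_mem_stab {n : ℕ} {ψ : QState n} {x y : GV n}
    (hx : x ∈ stab ψ) (hy : y ∈ stab ψ) : gBracket x y ∈ stab ψ := by
  obtain ⟨hx1, hx2⟩ := mem_stab_iff.mp hx
  obtain ⟨hy1, hy2⟩ := mem_stab_iff.mp hy
  refine mem_stab_iff.mpr ⟨?_, bracket_mem_ker ψ x y hx2 hy2⟩
  obtain ⟨-, hx1'⟩ := Submodule.mem_prod.mp hx1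
  obtain ⟨-, hy1'⟩ := Submodule.mem_prod.mp hy1
  refine Submodule.mem_prod.mpr ⟨trivial, Submodule.mem_pi.mpr fun k _ => ?_⟩
  exact su2_closed_bracket (Submodule.mem_pi.mp hx1' k trivial)
    (Submodule.mem_pi.mp hy1' k trivial)

lemma gBracket_mem_gS_inter {n : ℕ} {S T : Set (Fin n)} {x y : GV n}
    (hx : x ∈ gS S) (hy : y ∈ gS T) : gBracket x y ∈ gS (S ∩ T) := by
  obtain ⟨-, hx2, hx3⟩ := mem_gS_iff.mp hx
  obtain ⟨-, hy2, hy3⟩ := mem_gS_iff.mp hy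
  refine mem_gS_iff.mpr ⟨rfl, fun k hk => ?_, fun k hk => ?_⟩
  · exact su2_closed_bracket (hx2 k hk.1) (hy2 k hk.2)
  · show ⁅x.2 k, y.2 k⁆ = 0
    rw [Set.mem_inter_iff] at hk
    push_neg at hk
    by_cases hkS : k ∈ S
    · rw [hy3 k (hk hkS), Ring.lie_def]; simp
    · rw [hx3 k hkS, Ring.lie_def]; simp

instance gvFinDim (n : ℕ) : FiniteDimensional ℝ (GV n) := inferInstance

lemma block_inj {n : ℕ} {ψ : QState n} {S : Set (Fin n)} (hS : Su2Block ψ S)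
    {j : Fin n} (hj : j ∈ S) {x : GV n} (hx : x ∈ stab ψ ⊓ gS S) (hxj : x.2 j = 0) :
    x = 0 := by
  have hsub : S \ {j} ⊂ S := by
    refine (Set.diff_subset).ssubset_of_ne ?_
    intro h
    have : j ∈ S \ {j} := h.symm ▸ hj
    simp at this
  have h0 := hS.2 _ hsub
  have hbot : stab ψ ⊓ gS (S \ {j}) = ⊥ := Submodule.finrank_eq_zero.mp h0
  have hxm : x ∈ stab ψ ⊓ gS (S \ {j}) := by
    obtain ⟨hx1, hx2⟩ := Submodule.mem_inf.mp hx
    obtain ⟨hg1, hg2, hg3⟩ := mem_gS_iff.mp hx2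
    refine Submodule.mem_inf.mpr ⟨hx1, mem_gS_iff.mpr ⟨hg1, fun k hk => hg2 k hk.1,
      fun k hk => ?_⟩⟩
    by_cases hkS : k ∈ S
    · have : k = j := by
        by_contra hne
        exact hk ⟨hkS, hne⟩
      rw [this]; exact hxj
    · exact hg3 k hkS
  rw [hbot] at hxm
  exact hxm

end Aux3
/-- A qubit belongs to at most one `su(2)` block for `ψ`. -/
theorem stmt4 {n : ℕ} (hn : 1 ≤ n) (ψ : QState n) (hψ : ψ ≠ 0)
    (S T : Set (Fin n)) (hS : Su2Block ψ S) (hT : Su2Block ψ T)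
    (j : Fin n) (hjS : j ∈ S) (hjT : j ∈ T) : S = T := by
  by_contra hne
  by_cases hST : S ⊆ T
  · have h0 := hT.2 S (Set.ssubset_iff_subset_ne.mpr ⟨hST, hne⟩)
    have h1 := hS.1
    omega
  by_cases hTS : T ⊆ S
  · have h0 := hS.2 T (Set.ssubset_iff_subset_ne.mpr ⟨hTS, Ne.symm hne⟩)
    have h1 := hT.1
    omega
  · have hssub : S ∩ T ⊂ S := by
      refine Set.ssubset_iff_subset_ne.mpr ⟨Set.inter_subset_left, ?_⟩
      intro h
      exact hST (by rw [← h]; exact Set.inter_subset_right)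
    have hbot : stab ψ ⊓ gS (S ∩ T) = ⊥ := Submodule.finrank_eq_zero.mp (hS.2 _ hssub)
    have hTne : stab ψ ⊓ gS T ≠ ⊥ := by
      intro h
      have h1 := hT.1
      rw [h, finrank_bot] at h1
      omega
    obtain ⟨y, hy, hy0⟩ := (Submodule.ne_bot_iff _).mp hTne
    have hyj : y.2 j ≠ 0 := fun h => hy0 (block_inj hT hjT hy h)
    have hysu2 : y.2 j ∈ su2 := (mem_gS_iff.mp (Submodule.mem_inf.mp hy).2).2.1 j hjT
    set W := stab ψ ⊓ gS S with hW
    let f : W →ₗ[ℝ] Matrix (Fin 2) (Fin 2) ℂ := (Pj j).comp W.subtype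
    have hfinj : Function.Injective f := by
      refine LinearMap.ker_eq_bot.mp (LinearMap.ker_eq_bot'.mpr fun u hu => ?_)
      have hu' : (u : GV n).2 j = 0 := hu
      exact Subtype.ext (block_inj hS hjS u.2 hu')
    have hrange : Module.finrank ℝ ↥(LinearMap.range f) = Module.finrank ℝ ↥W :=
      LinearMap.finrank_range_of_inj hfinj
    have hle : LinearMap.range f ≤ Submodule.span ℝ {y.2 j} := by
      rintro m ⟨u, rfl⟩
      have hu : (u : GV n) ∈ stab ψ ⊓ gS S := u.2
      obtain ⟨hu1, hu2⟩ := Submodule.mem_inf.mp hu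
      have husu2 : (u : GV n).2 j ∈ su2 := (mem_gS_iff.mp hu2).2.1 j hjS
      obtain ⟨hy1, hy2⟩ := Submodule.mem_inf.mp hy
      have hbr : gBracket (u : GV n) y ∈ stab ψ ⊓ gS (S ∩ T) :=
        Submodule.mem_inf.mpr ⟨gBracket_mem_stab hu1 hy1, gBracket_mem_gS_inter hu2 hy2⟩
      rw [hbot] at hbr
      have hbr0 : gBracket (u : GV n) y = 0 := hbr
      have hcj : ⁅(u : GV n).2 j, y.2 j⁆ = 0 := by
        have := congrFun (congrArg Prod.snd hbr0) j
        simpa [gBracket] using this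
      have hcomm : (u : GV n).2 j * y.2 j = y.2 j * (u : GV n).2 j := by
        rw [Ring.lie_def, sub_eq_zero] at hcj
        exact hcj
      obtain ⟨r, hr⟩ := su2_comm_scalar husu2 hysu2 hyj hcomm
      exact Submodule.mem_span_singleton.mpr ⟨r, hr.symm⟩
    have h1 : Module.finrank ℝ ↥(LinearMap.range f) ≤ 1 := by
      calc Module.finrank ℝ ↥(LinearMap.range f)
          ≤ Module.finrank ℝ ↥(Submodule.span ℝ {y.2 j}) := Submodule.finrank_mono hle
        _ = 1 := finrank_span_singleton hyj
    have h2 := hS.1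
    rw [← hW] at h2
    omega
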